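/- Consider the ODE system u' = r₁m² − γ₀u, u_p' = γ₀u − τ_p u_p, m' = τ_S I/(1+Cuⁿ) − dm − r₂um − r₁m², M' = α₁u(M̂−M)M/(1+α₂u) − σM + λ_M, I' = τ₁uM/(1+τ₂u) − τ₃I, with all parameters positive and n ≥ 1. For any non-negative initial condition (u(0), u_p(0), m(0), M(0), I(0)), any solution remains non-negative in all components for all t ≥ 0 in its interval of existence. -/

import Mathlib

open Set

/-- Quasipositivity lemma: if `f 0 ≥ 0` and `f' t ≥ K * f t` whenever `f t ≤ 0`,
then `f` stays nonnegative on `[0, T]`. -/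
lemma nonneg_of_quasipos (T K : ℝ) (f f' : ℝ → ℝ)
    (hf : ∀ t ∈ Icc (0:ℝ) T, HasDerivAt f (f' t) t)
    (h0 : 0 ≤ f 0)
    (hq : ∀ t ∈ Icc (0:ℝ) T, f t ≤ 0 → K * f t ≤ f' t) :
    ∀ t ∈ Icc (0:ℝ) T, 0 ≤ f t := by
  set K' : ℝ := |K| + 1 with hK'
  have hKK' : K < K' := lt_of_le_of_lt (le_abs_self K) (by simp [hK'])
  have key : ∀ ε > (0:ℝ), ∀ t ∈ Icc (0:ℝ) T, -f t ≤ ε * Real.exp (K' * t) := by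
    intro ε hε
    have hcont : ContinuousOn (fun t => -f t) (Icc 0 T) :=
      fun x hx => ((hf x hx).continuousAt.neg).continuousWithinAt
    have hBd : ∀ x : ℝ, HasDerivAt (fun t => ε * Real.exp (K' * t))
        (ε * (K' * Real.exp (K' * x))) x := by
      intro x
      have := (Real.hasDerivAt_exp (K' * x)).comp x ((hasDerivAt_id x).const_mul K')
      simpa [mul_comm, mul_assoc, mul_left_comm] using this.const_mul ε
    have := image_le_of_deriv_right_lt_deriv_boundary (a := 0) (b := T)
      (f := fun t => -f t) (f' := fun t => -f' t) hcont
      (fun x hx => ((hf x ⟨hx.1, hx.2.le⟩).neg).hasDerivWithinAt)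
      (B := fun t => ε * Real.exp (K' * t)) (B' := fun t => ε * (K' * Real.exp (K' * t)))
      (by simpa using le_trans (neg_nonpos.mpr h0) (by positivity)) hBd ?_
    · exact fun t ht => this ht
    · intro x hx hfx
      have hx' : x ∈ Icc (0:ℝ) T := ⟨hx.1, hx.2.le⟩
      have hfx' : -f x = ε * Real.exp (K' * x) := hfx
      have hexp : 0 < ε * Real.exp (K' * x) := by positivity
      have hpos : 0 < -f x := hfx' ▸ hexp
      have hfxneg : f x ≤ 0 := by linarith
      have h1 : K * f x ≤ f' x := hq x hx' hfxneg
      have h2 : -f' x ≤ K * (-f x) := by linarith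
      have h3 : K * (-f x) < K' * (-f x) := mul_lt_mul_of_pos_right hKK' hpos
      have h4 : K' * (-f x) = ε * (K' * Real.exp (K' * x)) := by rw [hfx']; ring
      show -f' x < ε * (K' * Real.exp (K' * x))
      linarith
  intro t ht
  by_contra hneg
  push_neg at hneg
  have hE : 0 < Real.exp (K' * t) := Real.exp_pos _
  have hε : 0 < (-f t) / (2 * Real.exp (K' * t)) :=
    div_pos (by linarith) (by positivity)
  have h2 := key _ hε t ht
  have heq : (-f t) / (2 * Real.exp (K' * t)) * Real.exp (K' * t) = (-f t) / 2 := by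
    field_simp
  rw [heq] at h2
  linarith

/-- Non-negativity of solutions of the spatially homogeneous Alzheimer model. -/
theorem stmt_0
    (r₁ r₂ γ₀ τp τS C d α₁ α₂ Mhat σ lamM τ₁ τ₂ τ₃ : ℝ) (n : ℕ)
    (hr₁ : 0 < r₁) (hr₂ : 0 < r₂) (hγ₀ : 0 < γ₀) (hτp : 0 < τp) (hτS : 0 < τS)
    (hC : 0 < C) (hd : 0 < d) (hα₁ : 0 < α₁) (hα₂ : 0 < α₂) (hM : 0 < Mhat)
    (hσ : 0 < σ) (hlam : 0 < lamM) (hτ₁ : 0 < τ₁) (hτ₂ : 0 < τ₂) (hτ₃ : 0 < τ₃)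
    (hn : 1 ≤ n)
    (T : ℝ) (u up m M I : ℝ → ℝ)
    (hu : ∀ t ∈ Icc (0:ℝ) T, HasDerivAt u (r₁ * (m t)^2 - γ₀ * u t) t)
    (hup : ∀ t ∈ Icc (0:ℝ) T, HasDerivAt up (γ₀ * u t - τp * up t) t)
    (hm : ∀ t ∈ Icc (0:ℝ) T, HasDerivAt m
      (τS * I t / (1 + C * (u t)^n) - d * m t - r₂ * u t * m t - r₁ * (m t)^2) t)
    (hM' : ∀ t ∈ Icc (0:ℝ) T, HasDerivAt M
      (α₁ * u t / (1 + α₂ * u t) * (Mhat - M t) * M t - σ * M t + lamM) t)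
    (hI : ∀ t ∈ Icc (0:ℝ) T, HasDerivAt I
      (τ₁ * u t / (1 + τ₂ * u t) * M t - τ₃ * I t) t)
    (h0 : 0 ≤ u 0 ∧ 0 ≤ up 0 ∧ 0 ≤ m 0 ∧ 0 ≤ M 0 ∧ 0 ≤ I 0) :
    ∀ t ∈ Icc (0:ℝ) T, 0 ≤ u t ∧ 0 ≤ up t ∧ 0 ≤ m t ∧ 0 ≤ M t ∧ 0 ≤ I t := by
  obtain ⟨hu0, hup0, hm0, hM0, hI0⟩ := h0
  -- Step 1: u ≥ 0
  have hU : ∀ t ∈ Icc (0:ℝ) T, 0 ≤ u t := by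
    apply nonneg_of_quasipos T 0 u _ hu hu0
    intro t ht hut
    have h1 : 0 ≤ r₁ * (m t)^2 := by positivity
    have h2 : γ₀ * u t ≤ 0 := mul_nonpos_of_nonneg_of_nonpos hγ₀.le hut
    linarith
  -- Step 2: up ≥ 0
  have hUP : ∀ t ∈ Icc (0:ℝ) T, 0 ≤ up t := by
    apply nonneg_of_quasipos T 0 up _ hup hup0
    intro t ht hupt
    have h1 : 0 ≤ γ₀ * u t := mul_nonneg hγ₀.le (hU t ht)
    have h2 : τp * up t ≤ 0 := mul_nonpos_of_nonneg_of_nonpos hτp.le hupt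
    linarith
  -- bound on M
  obtain ⟨BM, hBM⟩ : ∃ B, ∀ x ∈ Icc (0:ℝ) T, ‖M x‖ ≤ B :=
    isCompact_Icc.exists_bound_of_continuousOn
      (fun x hx => (hM' x hx).continuousAt.continuousWithinAt)
  -- Step 3: M ≥ 0
  have hMn : ∀ t ∈ Icc (0:ℝ) T, 0 ≤ M t := by
    apply nonneg_of_quasipos T (α₁ / α₂ * (Mhat + BM)) M _ hM' hM0
    intro t ht hMt
    have hut := hU t ht
    have hD : (0:ℝ) < 1 + α₂ * u t := by positivity
    have ha2 : α₁ * u t / (1 + α₂ * u t) ≤ α₁ / α₂ := by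
      rw [div_le_div_iff₀ hD hα₂]; nlinarith
    have habs : -BM ≤ M t := (abs_le.mp (by simpa using hBM t ht)).1
    have hMM : Mhat - M t ≤ Mhat + BM := by linarith
    have hMMpos : 0 ≤ Mhat - M t := by linarith
    have ha : 0 ≤ α₁ * u t / (1 + α₂ * u t) := by positivity
    have h1 : α₁ * u t / (1 + α₂ * u t) * (Mhat - M t) ≤ α₁ / α₂ * (Mhat + BM) :=
      mul_le_mul ha2 hMM hMMpos (by positivity)
    have h2 := mul_le_mul_of_nonpos_right h1 hMt
    have h3 : σ * M t ≤ 0 := mul_nonpos_of_nonneg_of_nonpos hσ.le hMt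
    linarith
  -- Step 4: I ≥ 0
  have hIn : ∀ t ∈ Icc (0:ℝ) T, 0 ≤ I t := by
    apply nonneg_of_quasipos T 0 I _ hI hI0
    intro t ht hIt
    have hut := hU t ht
    have hMt := hMn t ht
    have hD : (0:ℝ) < 1 + τ₂ * u t := by positivity
    have h1 : 0 ≤ τ₁ * u t / (1 + τ₂ * u t) * M t :=
      mul_nonneg (div_nonneg (mul_nonneg hτ₁.le hut) hD.le) hMt
    have h2 : τ₃ * I t ≤ 0 := mul_nonpos_of_nonneg_of_nonpos hτ₃.le hIt
    linarith
  -- bound on m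
  obtain ⟨Bm, hBm⟩ : ∃ B, ∀ x ∈ Icc (0:ℝ) T, ‖m x‖ ≤ B :=
    isCompact_Icc.exists_bound_of_continuousOn
      (fun x hx => (hm x hx).continuousAt.continuousWithinAt)
  -- Step 5: m ≥ 0
  have hmn : ∀ t ∈ Icc (0:ℝ) T, 0 ≤ m t := by
    apply nonneg_of_quasipos T (r₁ * Bm) m _ hm hm0
    intro t ht hmt
    have hut := hU t ht
    have hIt := hIn t ht
    have hpow : 0 ≤ (u t)^n := pow_nonneg hut n
    have hDu : (0:ℝ) < 1 + C * (u t)^n := by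
      have : 0 ≤ C * (u t)^n := mul_nonneg hC.le hpow
      linarith
    have h1 : 0 ≤ τS * I t / (1 + C * (u t)^n) :=
      div_nonneg (mul_nonneg hτS.le hIt) hDu.le
    have habs : -Bm ≤ m t := (abs_le.mp (by simpa using hBm t ht)).1
    have h2 : 0 ≤ (-m t) * (Bm + m t) :=
      mul_nonneg (by linarith) (by linarith)
    have h3 : r₂ * u t * m t ≤ 0 :=
      mul_nonpos_of_nonneg_of_nonpos (mul_nonneg hr₂.le hut) hmt
    have h4 : (m t)^2 ≤ -(Bm * m t) := by nlinarith
    have h5 : r₁ * (m t)^2 ≤ r₁ * (-(Bm * m t)) :=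
      mul_le_mul_of_nonneg_left h4 hr₁.le
    have h6 : d * m t ≤ 0 := mul_nonpos_of_nonneg_of_nonpos hd.le hmt
    have h7 : r₁ * Bm * m t = -(r₁ * (-(Bm * m t))) := by ring
    linarith
  intro t ht
  exact ⟨hU t ht, hUP t ht, hmn t ht, hMn t ht, hIn t ht⟩
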